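/- arXiv:1505.06418 — 2 statements merged into one kernel-verified Lean document; each statement's English description precedes it below -/
import Mathlib

section
/- (Schur–Horn, easy direction) For any real symmetric n×n matrix A with eigenvalues λ_1,...,λ_n, the diagonal vector (A_{11},...,A_{nn}) lies in the convex hull of {(λ_{σ(1)},...,λ_{σ(n)}) : σ ∈ S_n} (the permutahedron of λ). -/
open Matrix

/-- Schur–Horn, easy direction: the diagonal of a real symmetric matrix with
eigenvalues `λ₁, …, λₙ` (i.e. a matrix of the form `O D_λ Oᵀ` with `O`
orthogonal) lies in the permutahedron of `λ`, the convex hull of the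
permutations of `λ`. -/
theorem diag_mem_permutahedron (n : ℕ) (lam : Fin n → ℝ)
    (O : Matrix (Fin n) (Fin n) ℝ) (hO : O ∈ Matrix.orthogonalGroup (Fin n) ℝ) :
    (fun i => (O * Matrix.diagonal lam * Oᵀ) i i) ∈
      convexHull ℝ {x : Fin n → ℝ | ∃ σ : Equiv.Perm (Fin n), x = lam ∘ σ} := by
  set M : Matrix (Fin n) (Fin n) ℝ := fun i j => (O i j) ^ 2 with hMdef
  have hrow : ∀ i, ∑ j, M i j = 1 := by
    intro i
    have h1 : O * star O = 1 := (Matrix.mem_orthogonalGroup_iff _ _).mp hO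
    have := congrFun (congrFun h1 i) i
    show ∑ j, O i j ^ 2 = 1
    simpa [Matrix.mul_apply, Matrix.star_apply, sq] using this
  have hcol : ∀ j, ∑ i, M i j = 1 := by
    intro j
    have h1 : star O * O = 1 := (Matrix.mem_orthogonalGroup_iff' _ _).mp hO
    have := congrFun (congrFun h1 j) j
    show ∑ i, O i j ^ 2 = 1
    simpa [Matrix.mul_apply, Matrix.star_apply, sq] using this
  have hM : M ∈ doublyStochastic ℝ (Fin n) := by
    rw [mem_doublyStochastic_iff_sum]
    exact ⟨fun i j => sq_nonneg _, hrow, hcol⟩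
  -- the diagonal equals M *ᵥ lam
  have hdiag : (fun i => (O * Matrix.diagonal lam * Oᵀ) i i) = M *ᵥ lam := by
    funext i
    simp only [Matrix.mul_apply, Matrix.diagonal_apply, Matrix.transpose_apply,
      Matrix.mulVec, dotProduct, hMdef]
    refine Finset.sum_congr rfl fun j _ => ?_
    rw [Finset.sum_eq_single j (by intro b _ hb; simp [hb]) (by simp)]
    simp [sq]; ring
  rw [hdiag]
  -- linear map M ↦ M *ᵥ lam
  let L : Matrix (Fin n) (Fin n) ℝ →ₗ[ℝ] (Fin n → ℝ) :=
    { toFun := fun A => A *ᵥ lam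
      map_add' := fun A B => Matrix.add_mulVec A B lam
      map_smul' := fun c A => by
        funext i
        simp [Matrix.mulVec, dotProduct, Finset.mul_sum, mul_assoc] }
  have hMmem : M ∈ convexHull ℝ {σ.permMatrix ℝ | σ : Equiv.Perm (Fin n)} := by
    rw [← doublyStochastic_eq_convexHull_permMatrix]; exact hM
  have himg : L M ∈ L '' (convexHull ℝ {σ.permMatrix ℝ | σ : Equiv.Perm (Fin n)}) :=
    ⟨M, hMmem, rfl⟩
  rw [L.image_convexHull] at himg
  refine convexHull_mono ?_ himg
  rintro x ⟨y, ⟨σ, rfl⟩, rfl⟩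
  refine ⟨σ, ?_⟩
  funext i
  simp [L, Matrix.mulVec, dotProduct, Equiv.Perm.permMatrix,
    PEquiv.toMatrix, Equiv.toPEquiv_apply]
end

section
/- For a probability vector Y (Y_i ≥ 0, Σ Y_i = 1) and composition η of N, the multinomial density family B^N_η(Y) = C(N,η) ∏_i Y_i^{η_i} satisfies: for every continuous function f on the simplex Δ_{n-1} and every Y ∈ Δ_{n-1}, Σ_{η ⊢ N} B^N_η(Y) f(η/N) → f(Y) as N → ∞. -/
open Finset Filter

lemma bernstein_marginal {n : ℕ} (Y : Fin n → ℝ) (hsum : ∑ j, Y j = 1) (i : Fin n) (N : ℕ)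
    (g : ℕ → ℝ) :
    ∑ η ∈ Finset.piAntidiag Finset.univ N,
      (Nat.multinomial Finset.univ η : ℝ) * (∏ j, Y j ^ η j) * g (η i)
    = ∑ k ∈ Finset.range (N + 1),
      (N.choose k : ℝ) * Y i ^ k * (1 - Y i) ^ (N - k) * g k := by
  have hi : i ∉ Finset.univ.erase i := Finset.notMem_erase _ _
  have hu : (Finset.univ : Finset (Fin n)) = Finset.cons i (Finset.univ.erase i) hi := by
    rw [Finset.cons_eq_insert, Finset.insert_erase (Finset.mem_univ i)]
  rw [hu, Finset.piAntidiag_cons, Finset.sum_disjiUnion,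
    Finset.Nat.sum_antidiagonal_eq_sum_range_succ_mk]
  refine Finset.sum_congr rfl fun k hk => ?_
  rw [Finset.mem_range, Nat.lt_succ_iff] at hk
  rw [Finset.sum_map]
  have herase : ∑ j ∈ Finset.univ.erase i, Y j = 1 - Y i := by
    have := Finset.add_sum_erase Finset.univ Y (Finset.mem_univ i)
    linarith [hsum]
  have key : ∀ η ∈ Finset.piAntidiag (Finset.univ.erase i) (N - k),
      (Nat.multinomial (Finset.cons i (Finset.univ.erase i) hi)
          ((addRightEmbedding fun t => if t = i then k else 0) η) : ℝ) *
        (∏ j ∈ Finset.cons i (Finset.univ.erase i) hi,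
          Y j ^ ((addRightEmbedding fun t => if t = i then k else 0) η) j) *
        g (((addRightEmbedding fun t => if t = i then k else 0) η) i)
      = ((N.choose k : ℝ) * Y i ^ k * g k) *
        ((Nat.multinomial (Finset.univ.erase i) η : ℝ) * ∏ j ∈ Finset.univ.erase i, Y j ^ η j) := by
    intro η hη
    rw [Finset.mem_piAntidiag] at hη
    have hηi : η i = 0 := by
      by_contra h
      exact hi (hη.2 i h)
    have happ : ∀ t, ((addRightEmbedding fun t => if t = i then k else 0) η) t
        = η t + if t = i then k else 0 := fun t => rfl
    have hvi : ((addRightEmbedding fun t => if t = i then k else 0) η) i = k := by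
      rw [happ, hηi, if_pos rfl, zero_add]
    have hvs : ∀ t ∈ Finset.univ.erase i,
        ((addRightEmbedding fun t => if t = i then k else 0) η) t = η t := by
      intro t ht
      rw [happ, if_neg (Finset.ne_of_mem_erase ht), add_zero]
    rw [Nat.multinomial_cons, Finset.prod_cons, hvi,
      Nat.multinomial_congr hvs, Finset.sum_congr rfl hvs, hη.1,
      Finset.prod_congr rfl (fun t ht => by rw [hvs t ht]),
      Nat.add_sub_cancel' hk]
    push_cast
    ring
  rw [Finset.sum_congr rfl key, ← Finset.mul_sum, ← Finset.sum_pow_eq_sum_piAntidiag, herase]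
  ring

lemma binom_variance (x : ℝ) (N : ℕ) (hN : 1 ≤ N) :
    ∑ k ∈ Finset.range (N + 1),
      (N.choose k : ℝ) * x ^ k * (1 - x) ^ (N - k) * ((k : ℝ) / N - x) ^ 2
    = x * (1 - x) / N := by
  have h := congrArg (Polynomial.eval x) (bernsteinPolynomial.variance (R := ℝ) N)
  simp only [Polynomial.eval_finset_sum, Polynomial.eval_mul, Polynomial.eval_pow,
    Polynomial.eval_sub, Polynomial.eval_smul, Polynomial.eval_X, Polynomial.eval_natCast,
    Polynomial.eval_one, bernsteinPolynomial, smul_eq_mul, nsmul_eq_mul] at h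
  have hN0 : (N : ℝ) ≠ 0 := by positivity
  have : ∀ k ∈ Finset.range (N + 1),
      (N.choose k : ℝ) * x ^ k * (1 - x) ^ (N - k) * ((k : ℝ) / N - x) ^ 2
      = (((N:ℝ) * x - k) ^ 2 * ((N.choose k : ℝ) * x ^ k * (1 - x) ^ (N - k))) / (N:ℝ)^2 := by
    intro k _
    field_simp
    ring
  rw [Finset.sum_congr rfl this, ← Finset.sum_div, h]
  field_simp


/-- Multivariate Bernstein approximation on the simplex: for a continuous
function `f` on `Δ_{n-1}` and `Y ∈ Δ_{n-1}`,
`∑_{η ⊢ N} C(N,η) (∏ i Y i ^ η i) f(η/N) → f Y` as `N → ∞`. -/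
theorem bernstein_simplex_tendsto (n : ℕ) (f : (Fin n → ℝ) → ℝ)
    (hf : ContinuousOn f (stdSimplex ℝ (Fin n)))
    (Y : Fin n → ℝ) (hY : Y ∈ stdSimplex ℝ (Fin n)) :
    Tendsto
      (fun N : ℕ =>
        ∑ η ∈ Finset.Nat.antidiagonalTuple n N,
          (Nat.multinomial Finset.univ η : ℝ) * (∏ i, Y i ^ η i) *
            f (fun i => (η i : ℝ) / (N : ℝ)))
      atTop (nhds (f Y)) := by
  obtain ⟨hY0, hY1⟩ := hY
  -- bound on f
  obtain ⟨M, hM⟩ := (isCompact_stdSimplex ℝ (Fin n)).exists_bound_of_continuousOn hf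
  have hM0 : 0 ≤ M := le_trans (norm_nonneg _) (hM Y ⟨hY0, hY1⟩)
  rw [Metric.tendsto_atTop]
  intro ε hε
  -- continuity at Y
  have hc : ContinuousWithinAt f (stdSimplex ℝ (Fin n)) Y := hf Y ⟨hY0, hY1⟩
  rw [Metric.continuousWithinAt_iff] at hc
  obtain ⟨δ, hδ, hδf⟩ := hc (ε / 2) (by positivity)
  set C : ℝ := 2 * M / δ ^ 2 with hC
  have hC0 : 0 ≤ C := by positivity
  obtain ⟨K, hK⟩ := exists_nat_gt (2 * C * n / ε)
  refine ⟨max 1 K, fun N hN => ?_⟩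
  have hN1 : 1 ≤ N := le_trans (le_max_left _ _) hN
  have hNK : (K : ℝ) ≤ N := by exact_mod_cast le_trans (le_max_right _ _) hN
  have hNpos : (0 : ℝ) < N := by exact_mod_cast hN1
  -- abbreviations
  set A := Finset.piAntidiag (Finset.univ : Finset (Fin n)) N with hA
  have hAT : Finset.Nat.antidiagonalTuple n N = A := by
    rw [hA, Finset.piAntidiag_univ_fin_eq_antidiagonalTuple]
  set B : (Fin n → ℕ) → ℝ := fun η => (Nat.multinomial Finset.univ η : ℝ) * ∏ i, Y i ^ η i
    with hBdef
  have hB0 : ∀ η, 0 ≤ B η := by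
    intro η
    apply mul_nonneg (Nat.cast_nonneg _)
    exact Finset.prod_nonneg fun i _ => pow_nonneg (hY0 i) _
  have hBsum : ∑ η ∈ A, B η = 1 := by
    have := Finset.sum_pow_eq_sum_piAntidiag (Finset.univ : Finset (Fin n)) Y N
    rw [hY1, one_pow] at this
    rw [hA, ← this]
  -- membership of η/N in the simplex
  have hmem : ∀ η ∈ A, (fun i => (η i : ℝ) / N) ∈ stdSimplex ℝ (Fin n) := by
    intro η hη
    rw [hA, Finset.mem_piAntidiag] at hη
    refine ⟨fun i => by positivity, ?_⟩
    rw [← Finset.sum_div]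
    have : ∑ i, ((η i : ℝ)) = (N : ℝ) := by exact_mod_cast congrArg Nat.cast hη.1
    rw [this, div_self (ne_of_gt hNpos)]
  -- variance identity
  have hvar : ∀ i : Fin n,
      ∑ η ∈ A, B η * ((η i : ℝ) / N - Y i) ^ 2 = Y i * (1 - Y i) / N := by
    intro i
    have := bernstein_marginal Y hY1 i N (fun k => ((k : ℝ) / N - Y i) ^ 2)
    rw [hA]
    rw [this, binom_variance (Y i) N hN1]
  -- total second moment bound
  have hq : ∑ η ∈ A, B η * (∑ i, ((η i : ℝ) / N - Y i) ^ 2) ≤ n / N := by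
    have hswap : ∑ η ∈ A, B η * (∑ i, ((η i : ℝ) / N - Y i) ^ 2)
        = ∑ i, ∑ η ∈ A, B η * ((η i : ℝ) / N - Y i) ^ 2 := by
      simp_rw [Finset.mul_sum]
      rw [Finset.sum_comm]
    rw [hswap]
    have hYle1 : ∀ i : Fin n, Y i ≤ 1 := by
      intro i
      calc Y i ≤ ∑ j, Y j := Finset.single_le_sum (fun j _ => hY0 j) (Finset.mem_univ i)
        _ = 1 := hY1
    calc ∑ i, ∑ η ∈ A, B η * ((η i : ℝ) / N - Y i) ^ 2
        = ∑ i : Fin n, Y i * (1 - Y i) / N := by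
          exact Finset.sum_congr rfl fun i _ => hvar i
      _ ≤ ∑ _i : Fin n, (1 : ℝ) / N := by
          apply Finset.sum_le_sum
          intro i _
          gcongr
          nlinarith [hY0 i, hYle1 i]
      _ = n / N := by
          rw [Finset.sum_const, Finset.card_univ, Fintype.card_fin, nsmul_eq_mul]
          ring
  -- pointwise bound
  have hpt : ∀ η ∈ A, |f (fun i => (η i : ℝ) / N) - f Y|
      ≤ ε / 2 + C * ∑ i, ((η i : ℝ) / N - Y i) ^ 2 := by
    intro η hη
    have hxS := hmem η hη
    have hq0 : (0:ℝ) ≤ ∑ i, ((η i : ℝ) / N - Y i) ^ 2 :=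
      Finset.sum_nonneg fun i _ => sq_nonneg _
    by_cases hcase : ∑ i, ((η i : ℝ) / N - Y i) ^ 2 < δ ^ 2
    · have hdist : dist (fun i => (η i : ℝ) / N) Y < δ := by
        rw [dist_pi_lt_iff hδ]
        intro i
        rw [Real.dist_eq]
        have h1 : ((η i : ℝ) / N - Y i) ^ 2 ≤ ∑ j, ((η j : ℝ) / N - Y j) ^ 2 :=
          Finset.single_le_sum (f := fun j => ((η j : ℝ) / N - Y j) ^ 2)
            (fun j _ => sq_nonneg _) (Finset.mem_univ i)
        have h2 := lt_of_le_of_lt h1 hcase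
        nlinarith [abs_nonneg ((η i : ℝ) / N - Y i), sq_abs ((η i : ℝ) / N - Y i)]
      have := hδf hxS hdist
      rw [Real.dist_eq] at this
      nlinarith [mul_nonneg hC0 hq0]
    · push_neg at hcase
      have hfx := hM _ hxS
      have hfY := hM Y ⟨hY0, hY1⟩
      rw [Real.norm_eq_abs] at hfx hfY
      have h2M : |f (fun i => (η i : ℝ) / N) - f Y| ≤ 2 * M := by
        calc |f (fun i => (η i : ℝ) / N) - f Y|
            ≤ |f (fun i => (η i : ℝ) / N)| + |f Y| := abs_sub _ _
          _ ≤ 2 * M := by linarith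
      have hCq : 2 * M ≤ C * ∑ i, ((η i : ℝ) / N - Y i) ^ 2 := by
        have hδ2 : C * δ ^ 2 = 2 * M := by
          rw [hC]; field_simp
        calc 2 * M = C * δ ^ 2 := hδ2.symm
          _ ≤ C * ∑ i, ((η i : ℝ) / N - Y i) ^ 2 :=
            mul_le_mul_of_nonneg_left hcase hC0
      linarith
  -- conclusion
  show dist (∑ η ∈ Finset.Nat.antidiagonalTuple n N,
      (Nat.multinomial Finset.univ η : ℝ) * (∏ i, Y i ^ η i) *
        f (fun i => (η i : ℝ) / (N : ℝ))) (f Y) < ε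
  rw [hAT, Real.dist_eq]
  have hsplit : ∑ η ∈ A, B η * f (fun i => (η i : ℝ) / N) - f Y
      = ∑ η ∈ A, B η * (f (fun i => (η i : ℝ) / N) - f Y) := by
    simp only [mul_sub]
    rw [Finset.sum_sub_distrib, ← Finset.sum_mul, hBsum, one_mul]
  have hfin : C * ((n : ℝ) / N) < ε / 2 := by
    have hKN : 2 * C * n / ε < (N : ℝ) := lt_of_lt_of_le hK hNK
    rw [div_lt_iff₀ hε] at hKN
    rw [mul_div_assoc' C, div_lt_iff₀ hNpos]
    nlinarith
  have hterm : ∀ η ∈ A, (Nat.multinomial Finset.univ η : ℝ) * (∏ i, Y i ^ η i) *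
        f (fun i => (η i : ℝ) / (N : ℝ)) = B η * f (fun i => (η i : ℝ) / N) :=
    fun η _ => rfl
  rw [Finset.sum_congr rfl hterm]
  calc |∑ η ∈ A, B η * f (fun i => (η i : ℝ) / N) - f Y|
      = |∑ η ∈ A, B η * (f (fun i => (η i : ℝ) / N) - f Y)| := by rw [hsplit]
    _ ≤ ∑ η ∈ A, |B η * (f (fun i => (η i : ℝ) / N) - f Y)| :=
        Finset.abs_sum_le_sum_abs _ _
    _ = ∑ η ∈ A, B η * |f (fun i => (η i : ℝ) / N) - f Y| :=
        Finset.sum_congr rfl fun η _ => by rw [abs_mul, abs_of_nonneg (hB0 η)]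
    _ ≤ ∑ η ∈ A, B η * (ε / 2 + C * ∑ i, ((η i : ℝ) / N - Y i) ^ 2) :=
        Finset.sum_le_sum fun η hη => mul_le_mul_of_nonneg_left (hpt η hη) (hB0 η)
    _ = ε / 2 * (∑ η ∈ A, B η) + C * ∑ η ∈ A, B η * (∑ i, ((η i : ℝ) / N - Y i) ^ 2) := by
        rw [Finset.mul_sum, Finset.mul_sum, ← Finset.sum_add_distrib]
        exact Finset.sum_congr rfl fun η _ => by ring
    _ = ε / 2 + C * ∑ η ∈ A, B η * (∑ i, ((η i : ℝ) / N - Y i) ^ 2) := by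
        rw [hBsum, mul_one]
    _ ≤ ε / 2 + C * ((n : ℝ) / N) := by
        have := mul_le_mul_of_nonneg_left hq hC0
        linarith
    _ < ε := by linarith
end
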